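/- Let (x_n) be an interval-filling sequence of positive reals and suppose r_k > x_k for some index k, where r_k = ∑_{n>k} x_n. Then there exists a point x in the achievement set with at least 3 distinct representations as a subsum, i.e., the cardinal function satisfies max rng(f) ≥ 3. -/

import Mathlib

open Set

/-- The achievement set of a sequence: all subsums. -/
noncomputable def achSet (x : ℕ → ℝ) : Set ℝ :=
  {t | ∃ S : Set ℕ, ∑' n : S, x n = t}

/-- The cardinal function: the number of representations of `t` as a subsum. -/
noncomputable def cardFun (x : ℕ → ℝ) (t : ℝ) : Cardinal :=
  Cardinal.mk {S : Set ℕ // ∑' n : S, x n = t}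

/-- The tail sum `r_k = ∑_{n > k} x n`. -/
noncomputable def tailSum (x : ℕ → ℝ) (k : ℕ) : ℝ := ∑' n, x (k + 1 + n)

/-- Prepending a term to a sequence. -/
def prepend (y : ℝ) (x : ℕ → ℝ) : ℕ → ℝ := fun n =>
  match n with
  | 0 => y
  | Nat.succ m => x m

/-- The tail from index `n` (inclusive). -/
noncomputable def tailFrom (x : ℕ → ℝ) (n : ℕ) : ℝ := ∑' m, x (n + m)

lemma tailSum_eq_tailFrom (x : ℕ → ℝ) (k : ℕ) : tailSum x k = tailFrom x (k + 1) := rfl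

lemma summable_tailFrom (x : ℕ → ℝ) (hsum : Summable x) (n : ℕ) :
    Summable (fun m => x (n + m)) := by
  have := (summable_nat_add_iff n).2 hsum
  exact this.congr fun m => by rw [add_comm]

lemma tailFrom_succ (x : ℕ → ℝ) (hsum : Summable x) (n : ℕ) :
    tailFrom x n = x n + tailFrom x (n + 1) := by
  have h := Summable.tsum_eq_zero_add (summable_tailFrom x hsum n)
  simp only [add_zero] at h
  rw [tailFrom, h, tailFrom]
  congr 1
  exact tsum_congr fun m => by ring_nf

lemma tailFrom_tendsto (x : ℕ → ℝ) : Filter.Tendsto (tailFrom x) Filter.atTop (nhds 0) := by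
  have h := tendsto_sum_nat_add x
  refine h.congr fun i => tsum_congr fun m => by rw [add_comm]

/-- Greedy representation lemma: any `c` with `0 ≤ c ≤ tailFrom x n₀` is a subsum
of the terms with indices `≥ n₀`. -/
lemma exists_rep (x : ℕ → ℝ) (hpos : ∀ n, 0 < x n) (hsum : Summable x)
    (hIF : ∀ n, x n ≤ tailSum x n) (n₀ : ℕ) (c : ℝ) (h0 : 0 ≤ c)
    (hc : c ≤ tailFrom x n₀) :
    ∃ S : Set ℕ, (∀ m ∈ S, n₀ ≤ m) ∧ ∑' m : S, x m = c := by
  classical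
  -- the remainder sequence of the greedy algorithm
  set rem : ℕ → ℝ := fun j =>
    Nat.rec c (fun j r => if x (n₀ + j) ≤ r then r - x (n₀ + j) else r) j with hrem
  have rem_zero : rem 0 = c := rfl
  have rem_succ : ∀ j, rem (j + 1) =
      if x (n₀ + j) ≤ rem j then rem j - x (n₀ + j) else rem j := fun j => rfl
  set S : Set ℕ := {m | n₀ ≤ m ∧ x m ≤ rem (m - n₀)} with hS
  -- invariant
  have inv : ∀ j, 0 ≤ rem j ∧ rem j ≤ tailFrom x (n₀ + j) := by
    intro j
    induction j with
    | zero => exact ⟨h0, by simpa [rem_zero] using hc⟩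
    | succ j ih =>
      rw [rem_succ]
      split_ifs with h
      · constructor
        · linarith
        · have := tailFrom_succ x hsum (n₀ + j)
          have hj : n₀ + (j + 1) = (n₀ + j) + 1 := by ring
          rw [hj]
          linarith [ih.2]
      · push_neg at h
        refine ⟨ih.1, ?_⟩
        have h2 : x (n₀ + j) ≤ tailSum x (n₀ + j) := hIF (n₀ + j)
        rw [tailSum_eq_tailFrom] at h2
        have hj : n₀ + (j + 1) = (n₀ + j) + 1 := by ring
        rw [hj]
        linarith
  -- partial sums
  have key : ∀ j, ∑ m ∈ Finset.range (n₀ + j), S.indicator x m = c - rem j := by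
    intro j
    induction j with
    | zero =>
      rw [rem_zero]
      have : ∀ m ∈ Finset.range (n₀ + 0), S.indicator x m = 0 := by
        intro m hm
        simp only [Finset.mem_range, add_zero] at hm
        apply Set.indicator_of_notMem
        intro hmem
        exact absurd hmem.1 (by omega)
      rw [Finset.sum_eq_zero this]
      ring
    | succ j ih =>
      have hr : n₀ + (j + 1) = (n₀ + j) + 1 := by ring
      rw [hr, Finset.sum_range_succ, ih, rem_succ]
      have hsub : (n₀ + j) - n₀ = j := by omega
      by_cases h : x (n₀ + j) ≤ rem j
      · have hmem : (n₀ + j) ∈ S := ⟨by omega, by rwa [hsub]⟩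
        rw [Set.indicator_of_mem hmem, if_pos h]
        ring
      · have hmem : (n₀ + j) ∉ S := by
          intro hc2
          obtain ⟨-, h2⟩ := hc2
          rw [hsub] at h2
          exact h h2
        rw [Set.indicator_of_notMem hmem, if_neg h]
        ring
  -- remainder tends to zero
  have hrem0 : Filter.Tendsto (fun N => rem (N - n₀)) Filter.atTop (nhds 0) := by
    apply squeeze_zero' (g := fun N => tailFrom x N)
    · exact Filter.Eventually.of_forall fun N => (inv (N - n₀)).1
    · filter_upwards [Filter.eventually_ge_atTop n₀] with N hN
      have := (inv (N - n₀)).2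
      rwa [Nat.add_sub_cancel' hN] at this
    · exact tailFrom_tendsto x
  -- HasSum of the indicator
  have hhas : HasSum (S.indicator x) c := by
    rw [hasSum_iff_tendsto_nat_of_nonneg
      (fun i => Set.indicator_nonneg (fun m _ => (hpos m).le) i) c]
    have heq : ∀ᶠ N in Filter.atTop,
        c - rem (N - n₀) = ∑ i ∈ Finset.range N, S.indicator x i := by
      filter_upwards [Filter.eventually_ge_atTop n₀] with N hN
      have := key (N - n₀)
      rw [Nat.add_sub_cancel' hN] at this
      rw [this]
    have : Filter.Tendsto (fun N => c - rem (N - n₀)) Filter.atTop (nhds (c - 0)) :=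
      tendsto_const_nhds.sub hrem0
    rw [sub_zero] at this
    exact this.congr' heq
  refine ⟨S, fun m hm => hm.1, ?_⟩
  exact (hasSum_subtype_iff_indicator.mpr hhas).tsum_eq

theorem stmt4 (x : ℕ → ℝ) (hpos : ∀ n, 0 < x n) (hanti : ∀ n, x (n + 1) ≤ x n)
    (hsum : Summable x) (hIF : ∀ n, x n ≤ tailSum x n)
    (k : ℕ) (hk : x k < tailSum x k) :
    ∃ t ∈ achSet x, 3 ≤ cardFun x t := by
  classical
  rw [tailSum_eq_tailFrom] at hk
  set c₀ : ℝ := tailFrom x (k + 1) - x k with hc₀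
  have hc₀pos : 0 < c₀ := by simp [hc₀]; linarith
  -- choose n ≥ k+1 with x n < c₀
  have hx0 : Filter.Tendsto x Filter.atTop (nhds 0) := hsum.tendsto_atTop_zero
  obtain ⟨n, hn1, hn2⟩ :=
    ((Filter.eventually_ge_atTop (k + 1)).and (hx0.eventually_lt_const hc₀pos)).exists
  -- representation T of x n using indices ≥ n+1
  obtain ⟨T, hT1, hT2⟩ := exists_rep x hpos hsum hIF (n + 1) (x n) (hpos n).le
    (by rw [← tailSum_eq_tailFrom]; exact hIF n)
  -- representation S3 of x k + x n using indices ≥ k+1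
  obtain ⟨S3, hS31, hS32⟩ := exists_rep x hpos hsum hIF (k + 1) (x k + x n)
    (by linarith [hpos k, hpos n]) (by simp only [hc₀] at hn2; linarith)
  set t : ℝ := x k + x n with ht
  -- the three sets
  set S1 : Set ℕ := {k} ∪ {n} with hS1def
  set S2 : Set ℕ := {k} ∪ T with hS2def
  have hkn : k ≠ n := by omega
  have hsum1 : ∑' m : S1, x m = t := by
    rw [hS1def, Summable.tsum_union_disjoint (by simp [Set.disjoint_singleton, hkn])
      (hsum.subtype _) (hsum.subtype _), tsum_singleton, tsum_singleton]
  have hdisj2 : Disjoint ({k} : Set ℕ) T := by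
    rw [Set.disjoint_left]
    rintro m rfl hm
    have := hT1 _ hm
    omega
  have hsum2 : ∑' m : S2, x m = t := by
    rw [hS2def, Summable.tsum_union_disjoint hdisj2 (hsum.subtype _) (hsum.subtype _),
      tsum_singleton, hT2]
  -- distinctness
  have hkS3 : k ∉ S3 := fun h => by have := hS31 _ h; omega
  have hne12 : S1 ≠ S2 := by
    intro h
    have hn1' : n ∈ S1 := by simp [hS1def]
    rw [h] at hn1'
    rcases hn1' with h' | h'
    · exact hkn (by simpa using h'.symm)
    · have := hT1 _ h'; omega
  have hne13 : S1 ≠ S3 := by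
    intro h
    exact hkS3 (h ▸ (by simp [hS1def] : k ∈ S1))
  have hne23 : S2 ≠ S3 := by
    intro h
    exact hkS3 (h ▸ (by simp [hS2def] : k ∈ S2))
  refine ⟨t, ⟨S1, hsum1⟩, ?_⟩
  -- cardinality
  have e1 : {S : Set ℕ // ∑' m : S, x m = t} := ⟨S1, hsum1⟩
  let f : Fin 3 → {S : Set ℕ // ∑' m : S, x m = t} :=
    ![⟨S1, hsum1⟩, ⟨S2, hsum2⟩, ⟨S3, hS32⟩]
  have hinj : Function.Injective f := by
    intro i j hij
    fin_cases i <;> fin_cases j <;>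
      simp_all [f, Subtype.ext_iff, hne12, hne13, hne23, hne12.symm, hne13.symm, hne23.symm]
  calc (3 : Cardinal) = Cardinal.mk (Fin 3) := by simp
    _ ≤ cardFun x t := Cardinal.mk_le_of_injective hinj
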